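/- The sequence m_g of numerical semigroups of genus g in infinite chains satisfies limsup_{g→∞} (m_g)^{1/g} ≤ √2. -/

import Mathlib

def IsNumericalSemigroup (Λ : Set ℕ) : Prop :=
  0 ∈ Λ ∧ (∀ a ∈ Λ, ∀ b ∈ Λ, a + b ∈ Λ) ∧ Λᶜ.Finite

noncomputable def sgGenus (Λ : Set ℕ) : ℕ := Λᶜ.ncard

noncomputable def sgFrobenius (Λ : Set ℕ) : ℕ := sSup Λᶜ

noncomputable def sgMultiplicity (Λ : Set ℕ) : ℕ := sInf (Λ \ {0})

def IsMinimalGenerator (Λ : Set ℕ) (μ : ℕ) : Prop :=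
  μ ∈ Λ ∧ μ ≠ 0 ∧ ¬ ∃ a ∈ Λ, ∃ b ∈ Λ, a ≠ 0 ∧ b ≠ 0 ∧ a + b = μ

def IsEffectiveGenerator (Λ : Set ℕ) (μ : ℕ) : Prop :=
  IsMinimalGenerator Λ μ ∧ sgFrobenius Λ < μ

def IsOrdinary (Λ : Set ℕ) : Prop := ∃ m : ℕ, Λ = {0} ∪ {n : ℕ | m ≤ n}

def IsStrongGenerator (Λ : Set ℕ) (μ : ℕ) : Prop :=
  IsEffectiveGenerator Λ μ ∧ IsMinimalGenerator (Λ \ {μ}) (sgMultiplicity Λ + μ)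

def IsChildOf (Λ' Λ : Set ℕ) : Prop :=
  IsNumericalSemigroup Λ' ∧ Λ' ⊂ Λ ∧ Λ' ∪ {sgFrobenius Λ'} = Λ

def sgDescendants (Λ : Set ℕ) : Set (Set ℕ) :=
  {Λ' | Relation.TransGen IsChildOf Λ' Λ}


namespace NSproof

variable {Λ : Set ℕ}

lemma mem_of_frob_lt (h : IsNumericalSemigroup Λ) {n : ℕ} (hn : sgFrobenius Λ < n) : n ∈ Λ := by
  by_contra hc
  exact absurd (le_csSup h.2.2.bddAbove (by exact hc)) (not_le.mpr hn)

lemma frob_notMem (h : IsNumericalSemigroup Λ) (hne : Λ ≠ Set.univ) : sgFrobenius Λ ∉ Λ := by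
  have hnonempty : Λᶜ.Nonempty := by
    rw [Set.nonempty_compl]; exact hne
  have := Nat.sSup_mem hnonempty h.2.2.bddAbove
  exact this

lemma gaps_subset (h : IsNumericalSemigroup Λ) : Λᶜ ⊆ Set.Icc 1 (sgFrobenius Λ) := by
  intro x hx
  constructor
  · rcases Nat.eq_zero_or_pos x with rfl | hp
    · exact absurd h.1 hx
    · exact hp
  · exact le_csSup h.2.2.bddAbove hx

lemma genus_le_frob (h : IsNumericalSemigroup Λ) : sgGenus Λ ≤ sgFrobenius Λ := by
  have h1 := Set.ncard_le_ncard (gaps_subset h) (Set.finite_Icc _ _)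
  have h2 : (Set.Icc 1 (sgFrobenius Λ)).ncard = sgFrobenius Λ := by
    rw [Set.ncard_eq_toFinset_card', Set.toFinset_Icc, Nat.card_Icc]
    omega
  rw [sgGenus]; omega

lemma genus_eq_zero_iff (h : IsNumericalSemigroup Λ) : sgGenus Λ = 0 ↔ Λ = Set.univ := by
  rw [sgGenus, Set.ncard_eq_zero h.2.2, Set.compl_empty_iff]

/-- the Frobenius number is at most 2g - 1 -/
lemma frob_le (h : IsNumericalSemigroup Λ) (hne : Λ ≠ Set.univ) :
    sgFrobenius Λ + 1 ≤ 2 * sgGenus Λ := by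
  classical
  set F := sgFrobenius Λ with hF
  set g := sgGenus Λ with hg
  -- elements of Λ in [1, F] inject into gaps via x ↦ F - x
  have hFg : F ∉ Λ := frob_notMem h hne
  have hinj : Set.InjOn (fun x => F - x) (Λ ∩ Set.Icc 1 F) := by
    intro x hx y hy hxy
    simp only at hxy
    have hx2 := hx.2.2; have hy2 := hy.2.2
    omega
  have hmaps : ∀ x ∈ Λ ∩ Set.Icc 1 F, F - x ∈ Λᶜ \ {F} := by
    intro x hx
    constructor
    · intro hcon
      have : x + (F - x) ∈ Λ := h.2.1 x hx.1 _ hcon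
      have hxF : x ≤ F := hx.2.2
      rw [Nat.add_sub_cancel' hxF] at this
      exact hFg this
    · simp only [Set.mem_singleton_iff]
      have h1 : 1 ≤ x := hx.2.1
      have hxF : x ≠ F := fun hc => hFg (hc ▸ hx.1)
      have h2 : x ≤ F := hx.2.2
      omega
  have hcard : (Λ ∩ Set.Icc 1 F).ncard ≤ (Λᶜ \ {F}).ncard :=
    Set.ncard_le_ncard_of_injOn _ hmaps hinj (h.2.2.diff)
  have hdiff : (Λᶜ \ {F}).ncard = g - 1 := Set.ncard_diff_singleton_of_mem (show F ∈ Λᶜ from hFg)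
  -- F = #gaps in [1,F] + #elements in [1,F]
  have hsplit : (Set.Icc 1 F).ncard = (Λ ∩ Set.Icc 1 F).ncard + (Λᶜ ∩ Set.Icc 1 F).ncard := by
    have hdis : Disjoint (Λ ∩ Set.Icc 1 F) (Λᶜ ∩ Set.Icc 1 F) :=
      Set.disjoint_left.mpr (fun a ha hb => hb.1 ha.1)
    rw [← Set.ncard_union_eq hdis ((Set.finite_Icc _ _).subset Set.inter_subset_right)
      ((Set.finite_Icc _ _).subset Set.inter_subset_right)]
    congr 1
    rw [← Set.union_inter_distrib_right, Set.union_compl_self, Set.univ_inter]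
  have hgapsfull : Λᶜ ∩ Set.Icc 1 F = Λᶜ := by
    apply Set.inter_eq_left.mpr (gaps_subset h)
  have hIcc : (Set.Icc 1 F).ncard = F := by
    rw [Set.ncard_eq_toFinset_card', Set.toFinset_Icc, Nat.card_Icc]
    omega
  have hg1 : 1 ≤ g := by
    rcases Nat.eq_zero_or_pos g with hc | hp
    · exact absurd ((genus_eq_zero_iff h).mp hc) hne
    · exact hp
  have hgg : Λᶜ.ncard = g := rfl
  rw [hgapsfull, hgg] at hsplit
  omega

lemma genus_le_of_ge : ∀ {n}, sgFrobenius Λ < n → True := fun _ => trivial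

-- multiplicity basics
lemma mult_pos (h : IsNumericalSemigroup Λ) : 0 < sgMultiplicity Λ ∧ sgMultiplicity Λ ∈ Λ := by
  have hne : (Λ \ {0}).Nonempty := by
    refine ⟨sgFrobenius Λ + 1, mem_of_frob_lt h (by omega), by simp⟩
  have h2 : sgMultiplicity Λ ∈ Λ \ {0} := Nat.sInf_mem hne
  have h3 : sgMultiplicity Λ ≠ 0 := by simpa using h2.2
  exact ⟨Nat.pos_of_ne_zero h3, h2.1⟩

lemma mult_le (_h : IsNumericalSemigroup Λ) {x : ℕ} (hx : x ∈ Λ) (hx0 : x ≠ 0) :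
    sgMultiplicity Λ ≤ x := Nat.sInf_le ⟨hx, hx0⟩

lemma mult_le_frob_succ (h : IsNumericalSemigroup Λ) : sgMultiplicity Λ ≤ sgFrobenius Λ + 1 :=
  mult_le h (mem_of_frob_lt h (by omega)) (by omega)

end NSproof

namespace NSproof2
open NSproof

variable {Λ : Set ℕ}

noncomputable def effGens (Λ : Set ℕ) : Set ℕ := {μ | IsEffectiveGenerator Λ μ}

noncomputable def hw (Λ : Set ℕ) : ℕ := (effGens Λ).ncard

noncomputable def par (Λ : Set ℕ) : Set ℕ := Λ ∪ {sgFrobenius Λ}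

lemma frob_pos (h : IsNumericalSemigroup Λ) (hne : Λ ≠ Set.univ) : 0 < sgFrobenius Λ := by
  have h1 := frob_notMem h hne
  rcases Nat.eq_zero_or_pos (sgFrobenius Λ) with hc | hp
  · exact absurd h.1 (by rw [← hc]; exact h1)
  · exact hp

lemma effGens_subset (h : IsNumericalSemigroup Λ) :
    effGens Λ ⊆ Set.Ioc (sgFrobenius Λ) (sgFrobenius Λ + sgMultiplicity Λ) := by
  rintro μ ⟨⟨hμΛ, hμ0, hmin⟩, hμF⟩
  refine ⟨hμF, ?_⟩
  by_contra hc
  push_neg at hc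
  have hm := mult_pos h
  have h1 : μ - sgMultiplicity Λ ∈ Λ := mem_of_frob_lt h (by omega)
  exact hmin ⟨sgMultiplicity Λ, hm.2, μ - sgMultiplicity Λ, h1, by omega, by omega, by omega⟩

lemma effGens_finite (h : IsNumericalSemigroup Λ) : (effGens Λ).Finite :=
  (Set.finite_Ioc _ _).subset (effGens_subset h)

lemma hw_le_mult (h : IsNumericalSemigroup Λ) : hw Λ ≤ sgMultiplicity Λ := by
  have := Set.ncard_le_ncard (effGens_subset h) (Set.finite_Ioc _ _)
  have h2 : (Set.Ioc (sgFrobenius Λ) (sgFrobenius Λ + sgMultiplicity Λ)).ncard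
      = sgMultiplicity Λ := by
    rw [Set.ncard_eq_toFinset_card', Set.toFinset_Ioc, Nat.card_Ioc]
    omega
  rw [hw]; omega

lemma compl_remove {μ : ℕ} (hμ : μ ∈ Λ) : (Λ \ {μ})ᶜ = Λᶜ ∪ {μ} := by
  ext x
  by_cases hx : x = μ <;> simp [hx, hμ]

lemma child_NS (h : IsNumericalSemigroup Λ) {μ : ℕ} (hμ : IsEffectiveGenerator Λ μ) :
    IsNumericalSemigroup (Λ \ {μ}) := by
  obtain ⟨⟨hμΛ, hμ0, hmin⟩, hμF⟩ := hμ
  refine ⟨⟨h.1, by simpa using Ne.symm hμ0⟩, ?_, ?_⟩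
  · rintro a ⟨ha, ha'⟩ b ⟨hb, hb'⟩
    refine ⟨h.2.1 a ha b hb, ?_⟩
    simp only [Set.mem_singleton_iff] at *
    intro hc
    rcases Nat.eq_zero_or_pos a with rfl | hpa
    · exact hb' (by omega)
    rcases Nat.eq_zero_or_pos b with rfl | hpb
    · exact ha' (by omega)
    exact hmin ⟨a, ha, b, hb, by omega, by omega, hc⟩
  · rw [compl_remove hμΛ]
    exact h.2.2.union (Set.finite_singleton _)

lemma frob_child (h : IsNumericalSemigroup Λ) {μ : ℕ} (hμ : IsEffectiveGenerator Λ μ) :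
    sgFrobenius (Λ \ {μ}) = μ := by
  rw [sgFrobenius, compl_remove hμ.1.1]
  apply le_antisymm
  · apply csSup_le ⟨μ, by simp⟩
    rintro x (hx | hx)
    · exact le_trans (le_csSup h.2.2.bddAbove hx) (le_of_lt hμ.2)
    · simp at hx; omega
  · exact le_csSup ((h.2.2.union (Set.finite_singleton _)).bddAbove) (by simp)

lemma genus_child (h : IsNumericalSemigroup Λ) {μ : ℕ} (hμΛ : μ ∈ Λ) :
    sgGenus (Λ \ {μ}) = sgGenus Λ + 1 := by
  rw [sgGenus, sgGenus, compl_remove hμΛ, Set.union_singleton,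
    Set.ncard_insert_of_notMem (by simp [hμΛ]) h.2.2]

/-- if the multiplicity is an effective generator, the semigroup is ordinary -/
lemma ord_of_mult_eff (h : IsNumericalSemigroup Λ)
    (hm : IsEffectiveGenerator Λ (sgMultiplicity Λ)) :
    Λ = {0} ∪ {n : ℕ | sgMultiplicity Λ ≤ n} ∧ sgGenus Λ = sgMultiplicity Λ - 1 := by
  have hmF := hm.2
  have hmpos := (mult_pos h).1
  set m := sgMultiplicity Λ with hmdef
  have hΛeq : Λ = {0} ∪ {n : ℕ | m ≤ n} := by
    ext x
    simp only [Set.union_def, Set.mem_setOf_eq, Set.mem_singleton_iff]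
    constructor
    · intro hx
      rcases Nat.eq_zero_or_pos x with rfl | hp
      · left; rfl
      · right; exact mult_le h hx (by omega)
    · rintro (rfl | hx)
      · exact h.1
      · exact mem_of_frob_lt h (by omega)
  refine ⟨hΛeq, ?_⟩
  have hcompl : Λᶜ = Set.Ico 1 (m) := by
    rw [hΛeq]
    ext x
    simp only [Set.mem_compl_iff, Set.union_def, Set.mem_setOf_eq, Set.mem_singleton_iff,
      Set.mem_Ico]
    omega
  rw [sgGenus, hcompl, Set.ncard_eq_toFinset_card', Set.toFinset_Ico, Nat.card_Ico]

/-- Lemma C : effective generators of a child -/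
lemma effGens_child_subset (h : IsNumericalSemigroup Λ) {μ : ℕ}
    (hμ : IsEffectiveGenerator Λ μ) (hμm : μ ≠ sgMultiplicity Λ) :
    effGens (Λ \ {μ}) ⊆ {ν ∈ effGens Λ | μ < ν} ∪ {μ + sgMultiplicity Λ} := by
  have hm := mult_pos h
  set m := sgMultiplicity Λ with hmdef
  rintro ν ⟨⟨hνΛ', hν0, hmin'⟩, hνF'⟩
  rw [frob_child h hμ] at hνF'
  by_cases hνμm : ν = μ + m
  · right; simp [hνμm]
  left
  refine ⟨⟨⟨hνΛ'.1, hν0, ?_⟩, lt_trans hμ.2 hνF'⟩, hνF'⟩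
  rintro ⟨a, ha, b, hb, ha0, hb0, hab⟩
  -- decomposition of ν inside Λ; transfer it to Λ \ {μ}
  have key : ∀ a b : ℕ, a ∈ Λ → b ∈ Λ → a ≠ 0 → b ≠ 0 → a + b = ν → a = μ → False := by
    intro a b ha hb ha0 hb0 hab haμ
    have hbm : m ≤ b := mult_le h hb hb0
    have hbm' : m < b := by
      rcases lt_or_eq_of_le hbm with h' | h'
      · exact h'
      · exact absurd (by omega : ν = μ + m) hνμm
    -- ν = m + (μ + b - m), both in Λ \ {μ}
    have h1 : μ + b - m ∈ Λ := mem_of_frob_lt h (by have := hμ.2; omega)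
    have hmμ : m ≠ μ := Ne.symm hμm
    exact hmin' ⟨m, ⟨hm.2, by simpa using hmμ⟩, μ + b - m,
      ⟨h1, by simp; omega⟩, by omega, by omega, by omega⟩
  by_cases haμ : a = μ
  · exact key a b ha hb ha0 hb0 hab haμ
  by_cases hbμ : b = μ
  · exact key b a hb ha hb0 ha0 (by omega) hbμ
  · exact hmin' ⟨a, ⟨ha, by simpa using haμ⟩, b, ⟨hb, by simpa using hbμ⟩, ha0, hb0, hab⟩

end NSproof2

namespace NSproof3
open NSproof NSproof2

variable {Λ : Set ℕ}

lemma geom2 (n : ℕ) : ∑ j ∈ Finset.range n, 2^j = 2^n - 1 := by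
  induction n with
  | zero => simp
  | succ n ih => rw [Finset.sum_range_succ, ih]; have := Nat.one_le_two_pow (n:=n); omega

lemma sum_le_of_injOn {α β : Type*} [DecidableEq β] {s : Finset α} {t : Finset β}
    (e : α → β) (f : α → ℕ) (F : β → ℕ)
    (hinj : ∀ x ∈ s, ∀ y ∈ s, e x = e y → x = y)
    (hmaps : ∀ x ∈ s, e x ∈ t) (hle : ∀ x ∈ s, f x ≤ F (e x)) :
    ∑ x ∈ s, f x ≤ ∑ y ∈ t, F y := by
  calc ∑ x ∈ s, f x ≤ ∑ x ∈ s, F (e x) := Finset.sum_le_sum hle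
    _ = ∑ y ∈ s.image e, F y := (Finset.sum_image hinj).symm
    _ ≤ ∑ y ∈ t, F y := Finset.sum_le_sum_of_subset
        (Finset.image_subset_iff.mpr hmaps)

lemma par_compl (h : IsNumericalSemigroup Λ) :
    (Λ ∪ {sgFrobenius Λ})ᶜ = Λᶜ \ {sgFrobenius Λ} := by
  ext x; simp [and_comm]

lemma par_NS (h : IsNumericalSemigroup Λ) (hne : Λ ≠ Set.univ) :
    IsNumericalSemigroup (Λ ∪ {sgFrobenius Λ}) := by
  have hF := frob_pos h hne
  refine ⟨Or.inl h.1, ?_, ?_⟩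
  · rintro a (ha | ha) b (hb | hb)
    · exact Or.inl (h.2.1 a ha b hb)
    · simp only [Set.mem_singleton_iff] at hb
      subst hb
      rcases Nat.eq_zero_or_pos a with rfl | hpa
      · exact Or.inr (by simp)
      · exact Or.inl (mem_of_frob_lt h (by omega))
    · simp only [Set.mem_singleton_iff] at ha
      subst ha
      rcases Nat.eq_zero_or_pos b with rfl | hpb
      · exact Or.inr (by simp)
      · exact Or.inl (mem_of_frob_lt h (by omega))
    · simp only [Set.mem_singleton_iff] at ha hb
      subst ha; subst hb
      exact Or.inl (mem_of_frob_lt h (by omega))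
  · rw [par_compl h]
    exact h.2.2.diff

lemma par_child (h : IsNumericalSemigroup Λ) (hne : Λ ≠ Set.univ) :
    Λ = (Λ ∪ {sgFrobenius Λ}) \ {sgFrobenius Λ} := by
  have hF := frob_notMem h hne
  ext x
  simp only [Set.mem_diff, Set.mem_union, Set.mem_singleton_iff]
  constructor
  · intro hx; exact ⟨Or.inl hx, fun hc => hF (hc ▸ hx)⟩
  · rintro ⟨hx | hx, hx'⟩
    · exact hx
    · exact absurd hx hx'

lemma frob_eff_par (h : IsNumericalSemigroup Λ) (hne : Λ ≠ Set.univ) :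
    IsEffectiveGenerator (Λ ∪ {sgFrobenius Λ}) (sgFrobenius Λ) := by
  have hF := frob_pos h hne
  have hFn := frob_notMem h hne
  constructor
  · refine ⟨Or.inr rfl, by omega, ?_⟩
    rintro ⟨a, ha, b, hb, ha0, hb0, hab⟩
    have haΛ : a ∈ Λ := by
      rcases ha with ha | ha
      · exact ha
      · simp only [Set.mem_singleton_iff] at ha; omega
    have hbΛ : b ∈ Λ := by
      rcases hb with hb | hb
      · exact hb
      · simp only [Set.mem_singleton_iff] at hb; omega
    exact hFn (hab ▸ h.2.1 a haΛ b hbΛ)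
  · rw [sgFrobenius, par_compl h]
    rcases Set.eq_empty_or_nonempty (Λᶜ \ {sgFrobenius Λ}) with he | hne'
    · rw [he]; simpa using hF
    · have hmem := Nat.sSup_mem hne' ((h.2.2.diff).bddAbove)
      have h1 : sSup (Λᶜ \ {sgFrobenius Λ}) ≤ sgFrobenius Λ :=
        le_csSup h.2.2.bddAbove hmem.1
      have h2 : sSup (Λᶜ \ {sgFrobenius Λ}) ≠ sgFrobenius Λ := by
        simpa using hmem.2
      omega

lemma par_genus (h : IsNumericalSemigroup Λ) (hne : Λ ≠ Set.univ) :
    sgGenus (Λ ∪ {sgFrobenius Λ}) + 1 = sgGenus Λ := by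
  have hF : sgFrobenius Λ ∈ Λᶜ := frob_notMem h hne
  have h1 : sgGenus (Λ ∪ {sgFrobenius Λ}) = sgGenus Λ - 1 := by
    rw [sgGenus, sgGenus, par_compl h]
    exact Set.ncard_diff_singleton_of_mem hF
  have h2 : 1 ≤ sgGenus Λ := by
    rcases Nat.eq_zero_or_pos (sgGenus Λ) with hc | hp
    · exact absurd ((genus_eq_zero_iff h).mp hc) hne
    · exact hp
  omega

noncomputable def NSgS (g : ℕ) : Set (Set ℕ) := {Λ | IsNumericalSemigroup Λ ∧ sgGenus Λ = g}

lemma NSgS_finite (g : ℕ) : (NSgS g).Finite := by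
  have himg : (compl '' NSgS g).Finite := by
    apply Set.Finite.subset ((Set.finite_Icc 1 (2*g)).finite_subsets)
    rintro s ⟨Λ, ⟨hΛ, hg⟩, rfl⟩
    by_cases hne : Λ = Set.univ
    · subst hne; simp
    · intro x hx
      have h1 := gaps_subset hΛ hx
      have h2 := frob_le hΛ hne
      simp only [Set.mem_Icc] at *
      omega
  exact Set.Finite.of_finite_image himg (fun a _ b _ hab => compl_injective hab)

noncomputable def NSF (g : ℕ) : Finset (Set ℕ) := (NSgS_finite g).toFinset

noncomputable def W (g : ℕ) : ℕ := ∑ Λ ∈ NSF g, 2^(hw Λ)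

lemma mem_NSF {g : ℕ} : Λ ∈ NSF g ↔ IsNumericalSemigroup Λ ∧ sgGenus Λ = g := by
  rw [NSF, Set.Finite.mem_toFinset]; rfl

/-- only one semigroup of genus 0 -/
lemma NSg_zero : NSF 0 = {Set.univ} := by
  ext Λ
  rw [mem_NSF, Finset.mem_singleton]
  constructor
  · rintro ⟨h, hg⟩; exact (genus_eq_zero_iff h).mp hg
  · rintro rfl
    refine ⟨⟨trivial, fun _ _ _ _ => trivial, by simp⟩, ?_⟩
    rw [sgGenus]; simp

lemma hw_univ : hw (Set.univ : Set ℕ) ≤ 1 := by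
  have hNS : IsNumericalSemigroup (Set.univ : Set ℕ) :=
    ⟨trivial, fun _ _ _ _ => trivial, by simp⟩
  have := hw_le_mult hNS
  have hm : sgMultiplicity (Set.univ : Set ℕ) = 1 := by
    rw [sgMultiplicity]
    have : (Set.univ : Set ℕ) \ {0} = {n : ℕ | 1 ≤ n} := by
      ext x; simp; omega
    rw [this]
    have : sInf {n : ℕ | 1 ≤ n} = 1 := by
      apply le_antisymm (Nat.sInf_le (by simp)) ?_
      exact le_csInf ⟨1, by simp⟩ (fun x hx => hx)
    exact this
  omega

end NSproof3

namespace NSproof4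
open NSproof NSproof2 NSproof3

open scoped Classical

lemma c_sum_le (h : IsNumericalSemigroup Λ) :
    ∑ μ ∈ (effGens_finite h).toFinset,
      2^(((effGens_finite h).toFinset.filter (fun ν => μ < ν)).card) ≤
      2^((effGens_finite h).toFinset.card) - 1 := by
  classical
  set EF := (effGens_finite h).toFinset with hEF
  set c : ℕ → ℕ := fun μ => (EF.filter (fun ν => μ < ν)).card with hc
  have hanti : ∀ x ∈ EF, ∀ y ∈ EF, x < y → c y < c x := by
    intro x hx y hy hxy
    apply Finset.card_lt_card
    constructor
    · intro ν hν
      simp only [hc, Finset.mem_filter] at *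
      exact ⟨hν.1, by omega⟩
    · intro hsub
      have := hsub (Finset.mem_filter.mpr ⟨hy, hxy⟩)
      simp only [hc, Finset.mem_filter] at this
      omega
  have hinj : ∀ x ∈ EF, ∀ y ∈ EF, c x = c y → x = y := by
    intro x hx y hy hxy
    rcases lt_trichotomy x y with h' | h' | h'
    · exact absurd hxy (by have := hanti x hx y hy h'; omega)
    · exact h'
    · exact absurd hxy (by have := hanti y hy x hx h'; omega)
  have hmaps : ∀ x ∈ EF, c x ∈ Finset.range EF.card := by
    intro x hx
    rw [Finset.mem_range]
    apply Finset.card_lt_card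
    constructor
    · exact Finset.filter_subset _ _
    · intro hsub
      have := hsub hx
      simp only [hc, Finset.mem_filter] at this
      omega
  calc ∑ μ ∈ EF, 2^(c μ) ≤ ∑ j ∈ Finset.range EF.card, 2^j :=
        sum_le_of_injOn c (fun μ => 2^(c μ)) (fun j => 2^j) hinj hmaps (fun x _ => le_refl _)
    _ = 2^EF.card - 1 := geom2 _

lemma fiber_sum_le {g : ℕ} {Λ : Set ℕ} (hΛ : Λ ∈ NSF g) :
    ∑ Λ' ∈ (NSF (g+1)).filter (fun Λ' => Λ' ∪ {sgFrobenius Λ'} = Λ), 2^(hw Λ') ≤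
      2 * 2^(hw Λ) + (if IsEffectiveGenerator Λ (sgMultiplicity Λ) then 2^(g+2) else 0) := by
  classical
  obtain ⟨h, hg⟩ := mem_NSF.mp hΛ
  set m := sgMultiplicity Λ with hm
  set fib := (NSF (g+1)).filter (fun Λ' => Λ' ∪ {sgFrobenius Λ'} = Λ) with hfib
  -- basic facts about fiber elements
  have hfacts : ∀ Λ' ∈ fib, IsNumericalSemigroup Λ' ∧
      IsEffectiveGenerator Λ (sgFrobenius Λ') ∧ Λ' = Λ \ {sgFrobenius Λ'} := by
    intro Λ' hΛ'
    rw [hfib, Finset.mem_filter, mem_NSF] at hΛ'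
    obtain ⟨⟨hNS', hg'⟩, hpar⟩ := hΛ'
    have hne' : Λ' ≠ Set.univ := by
      intro hcu
      have h0 : sgGenus Λ' = 0 := by rw [hcu, sgGenus]; simp
      omega
    refine ⟨hNS', ?_, ?_⟩
    · have := frob_eff_par hNS' hne'
      rwa [hpar] at this
    · rw [← hpar]; exact par_child hNS' hne'
  set EF := (effGens_finite h).toFinset with hEF
  have hEFmem : ∀ μ, μ ∈ EF ↔ IsEffectiveGenerator Λ μ := by
    intro μ; rw [hEF, Set.Finite.mem_toFinset]; rfl
  set c : ℕ → ℕ := fun μ => (EF.filter (fun ν => μ < ν)).card with hc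
  rw [← Finset.sum_filter_add_sum_filter_not fib (fun Λ' => sgFrobenius Λ' = m)]
  have hB : ∑ Λ' ∈ fib.filter (fun Λ' => sgFrobenius Λ' = m), 2^(hw Λ') ≤
      (if IsEffectiveGenerator Λ m then 2^(g+2) else 0) := by
    by_cases hP : IsEffectiveGenerator Λ m
    · rw [if_pos hP]
      have hsub : fib.filter (fun Λ' => sgFrobenius Λ' = m) ⊆ {Λ \ {m}} := by
        intro Λ' hΛ'
        rw [Finset.mem_filter] at hΛ'
        obtain ⟨hmem, hfm⟩ := hΛ'
        obtain ⟨_, _, heq⟩ := hfacts Λ' hmem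
        rw [Finset.mem_singleton, heq, hfm]
      rcases Finset.subset_singleton_iff.mp hsub with he | he
      · rw [he]; simp
      · rw [he, Finset.sum_singleton]
        -- bound hw (Λ \ {m})
        have hNS' := child_NS h hP
        have hmg : m = g + 1 := by
          have h1 := (ord_of_mult_eff h hP).2
          have hm1 := (mult_pos h).1
          rw [← hm] at h1 hm1
          omega
        have hmult' : sgMultiplicity (Λ \ {m}) ≤ m + 1 := by
          apply mult_le hNS'
          · refine ⟨mem_of_frob_lt h (by have := hP.2; omega), by simp⟩
          · omega
        have := hw_le_mult hNS'
        have h2 : hw (Λ \ {m}) ≤ g + 2 := by omega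
        exact Nat.pow_le_pow_right (by omega) h2
    · rw [if_neg hP]
      have : fib.filter (fun Λ' => sgFrobenius Λ' = m) = ∅ := by
        rw [Finset.filter_eq_empty_iff]
        intro Λ' hΛ'
        intro hc'
        exact hP (hc' ▸ (hfacts Λ' hΛ').2.1)
      rw [this]; simp
  have hA : ∑ Λ' ∈ fib.filter (fun Λ' => ¬ sgFrobenius Λ' = m), 2^(hw Λ') ≤ 2 * 2^(hw Λ) := by
    have hstep : ∑ Λ' ∈ fib.filter (fun Λ' => ¬ sgFrobenius Λ' = m), 2^(hw Λ') ≤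
        ∑ μ ∈ EF, 2^(c μ + 1) := by
      apply sum_le_of_injOn sgFrobenius _ (fun μ => 2^(c μ + 1))
      · intro x hx y hy hxy
        rw [Finset.mem_filter] at hx hy
        rw [(hfacts x hx.1).2.2, (hfacts y hy.1).2.2, hxy]
      · intro x hx
        rw [Finset.mem_filter] at hx
        exact (hEFmem _).mpr (hfacts x hx.1).2.1
      · intro x hx
        rw [Finset.mem_filter] at hx
        obtain ⟨hmem, hxm⟩ := hx
        obtain ⟨hNS', heff, heq⟩ := hfacts x hmem
        apply Nat.pow_le_pow_right (by omega)
        -- hw x ≤ c (sgFrobenius x) + 1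
        set μ := sgFrobenius x with hμ
        have hsub := effGens_child_subset h heff hxm
        have hfinU : ({ν ∈ effGens Λ | μ < ν} ∪ {μ + m} : Set ℕ).Finite :=
          ((effGens_finite h).subset (Set.sep_subset _ _)).union (Set.finite_singleton _)
        have hwx : hw x ≤ ({ν ∈ effGens Λ | μ < ν} ∪ {μ + m} : Set ℕ).ncard := by
          rw [hw, heq]
          exact Set.ncard_le_ncard hsub hfinU
        have hsetfin : ({ν ∈ effGens Λ | μ < ν} : Set ℕ) = ↑(EF.filter (fun ν => μ < ν)) := by
          ext ν
          simp only [Set.mem_setOf_eq, Finset.coe_filter, hEFmem]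
          rfl
        have h2 : ({ν ∈ effGens Λ | μ < ν} ∪ {μ + m} : Set ℕ).ncard ≤ c μ + 1 := by
          apply le_trans (Set.ncard_union_le _ _)
          rw [hsetfin, Set.ncard_coe_finset, Set.ncard_singleton]
        omega
    apply le_trans hstep
    have : ∑ μ ∈ EF, 2^(c μ + 1) = 2 * ∑ μ ∈ EF, 2^(c μ) := by
      rw [Finset.mul_sum]
      congr 1; ext μ; ring
    rw [this]
    have h1 : ∑ μ ∈ EF, 2^(c μ) ≤ 2^EF.card - 1 := c_sum_le h
    have h2 : hw Λ = EF.card := Set.ncard_eq_toFinset_card _ _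
    rw [h2]
    have := Nat.one_le_two_pow (n := EF.card)
    omega
  omega

end NSproof4

namespace NSproof5
open NSproof NSproof2 NSproof3 NSproof4

open scoped Classical

lemma W_rec (g : ℕ) : W (g+1) ≤ 2 * W g + 2^(g+2) := by
  classical
  have hmaps : ∀ Λ' ∈ NSF (g+1), (Λ' ∪ {sgFrobenius Λ'}) ∈ NSF g := by
    intro Λ' hΛ'
    obtain ⟨hNS', hg'⟩ := mem_NSF.mp hΛ'
    have hne' : Λ' ≠ Set.univ := by
      intro hcu
      have h0 : sgGenus Λ' = 0 := by rw [hcu, sgGenus]; simp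
      omega
    rw [mem_NSF]
    refine ⟨par_NS hNS' hne', ?_⟩
    have := par_genus hNS' hne'
    omega
  have hsplit := Finset.sum_fiberwise_of_maps_to hmaps (fun Λ' => (2:ℕ)^(hw Λ'))
  rw [W, ← hsplit]
  have hle : ∀ Λ ∈ NSF g,
      ∑ Λ' ∈ (NSF (g+1)).filter (fun Λ' => Λ' ∪ {sgFrobenius Λ'} = Λ), 2^(hw Λ') ≤
      2 * 2^(hw Λ) + (if IsEffectiveGenerator Λ (sgMultiplicity Λ) then 2^(g+2) else 0) :=
    fun Λ hΛ => fiber_sum_le hΛ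
  calc ∑ Λ ∈ NSF g, ∑ Λ' ∈ (NSF (g+1)).filter (fun Λ' => Λ' ∪ {sgFrobenius Λ'} = Λ), 2^(hw Λ')
      ≤ ∑ Λ ∈ NSF g, (2 * 2^(hw Λ) +
          (if IsEffectiveGenerator Λ (sgMultiplicity Λ) then 2^(g+2) else 0)) :=
        Finset.sum_le_sum hle
    _ = 2 * W g + ∑ Λ ∈ NSF g,
          (if IsEffectiveGenerator Λ (sgMultiplicity Λ) then 2^(g+2) else 0) := by
        rw [Finset.sum_add_distrib, W, Finset.mul_sum]
    _ ≤ 2 * W g + 2^(g+2) := by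
        have h1 : ∑ Λ ∈ NSF g,
            (if IsEffectiveGenerator Λ (sgMultiplicity Λ) then (2:ℕ)^(g+2) else 0) =
            ∑ Λ ∈ (NSF g).filter (fun Λ => IsEffectiveGenerator Λ (sgMultiplicity Λ)), 2^(g+2) :=
          (Finset.sum_filter _ _).symm
        have hcard : ((NSF g).filter
            (fun Λ => IsEffectiveGenerator Λ (sgMultiplicity Λ))).card ≤ 1 := by
          rw [Finset.card_le_one]
          intro a ha b hb
          rw [Finset.mem_filter, mem_NSF] at ha hb
          obtain ⟨⟨hNSa, hga⟩, hPa⟩ := ha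
          obtain ⟨⟨hNSb, hgb⟩, hPb⟩ := hb
          obtain ⟨hea, hga'⟩ := ord_of_mult_eff hNSa hPa
          obtain ⟨heb, hgb'⟩ := ord_of_mult_eff hNSb hPb
          have hma := (mult_pos hNSa).1
          have hmb := (mult_pos hNSb).1
          have : sgMultiplicity a = sgMultiplicity b := by omega
          rw [hea, heb, this]
        rw [h1, Finset.sum_const, smul_eq_mul]
        have : ((NSF g).filter
            (fun Λ => IsEffectiveGenerator Λ (sgMultiplicity Λ))).card * 2^(g+2) ≤ 1 * 2^(g+2) :=
          Nat.mul_le_mul_right _ hcard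
        omega

lemma W_bound (g : ℕ) : W g ≤ (2*g+2) * 2^g := by
  induction g with
  | zero =>
    rw [W, NSg_zero, Finset.sum_singleton]
    have := hw_univ
    calc (2:ℕ)^(hw Set.univ) ≤ 2^1 := Nat.pow_le_pow_right (by omega) this
      _ ≤ (2*0+2) * 2^0 := by norm_num
  | succ g ih =>
    calc W (g+1) ≤ 2 * W g + 2^(g+2) := W_rec g
      _ ≤ 2 * ((2*g+2) * 2^g) + 2^(g+2) := by omega
      _ = (2*(g+1)+2) * 2^(g+1) := by ring
      _ ≤ (2*(g+1)+2) * 2^(g+1) := le_refl _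

lemma card_NSF (g : ℕ) : (NSF g).card ≤ (2*g+2) * 2^g := by
  have h1 : (NSF g).card ≤ W g := by
    rw [W]
    calc (NSF g).card = ∑ _Λ ∈ NSF g, 1 := by rw [Finset.sum_const, smul_eq_mul, mul_one]
      _ ≤ ∑ Λ ∈ NSF g, 2^(hw Λ) := Finset.sum_le_sum (fun Λ _ => Nat.one_le_two_pow)
  exact le_trans h1 (W_bound g)

end NSproof5

namespace NSproof6
open NSproof

/-- representation for coprime pairs -/
lemma rep_pair {a b n : ℕ} (hco : Nat.Coprime a b) (ha : 0 < a) (hb : 0 < b)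
    (hn : a * b ≤ n) : ∃ x y, n = x * a + y * b := by
  rcases Nat.eq_or_lt_of_le hb with hb1 | hb2
  · exact ⟨0, n, by rw [← hb1]; ring⟩
  haveI : NeZero b := ⟨by omega⟩
  set u := ZMod.unitOfCoprime a hco with hu
  set z : ZMod b := (n : ZMod b) * ↑u⁻¹ with hz
  set x := z.val with hx
  have hxb : x < b := ZMod.val_lt z
  have hxa : x * a ≤ n := by
    have h1 : x * a ≤ (b-1) * a := Nat.mul_le_mul_right _ (by omega)
    have h2 : (b-1) * a + a = b * a := by
      have h3 : b - 1 + 1 = b := by omega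
      calc (b-1)*a + a = (b-1+1)*a := by ring
        _ = b * a := by rw [h3]
    have h4 : a * b = b * a := mul_comm a b
    omega
  have hcast : ((x * a : ℕ) : ZMod b) = (n : ZMod b) := by
    push_cast
    rw [hx, ZMod.natCast_val, ZMod.cast_id, hz]
    have hua : (↑u : ZMod b) = (a : ZMod b) := ZMod.coe_unitOfCoprime a hco
    calc (n : ZMod b) * ↑u⁻¹ * (a:ZMod b) = (n : ZMod b) * (↑u⁻¹ * ↑u) := by rw [hua]; ring
      _ = (n : ZMod b) := by
          rw [← Units.val_mul, inv_mul_cancel u, Units.val_one, mul_one]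
  have hdvd : b ∣ n - x * a := by
    have h0 : ((n - x * a : ℕ) : ZMod b) = 0 := by
      rw [Nat.cast_sub hxa, hcast, sub_self]
    exact (ZMod.natCast_eq_zero_iff _ _).mp h0
  obtain ⟨k, hk⟩ := hdvd
  exact ⟨x, k, by rw [mul_comm k b]; omega⟩

/-- all large enough multiples of the gcd lie in the additive closure of a finset -/
lemma closure_cofinite (s : Finset ℕ) (hpos : ∀ x ∈ s, 0 < x) :
    ∃ N, 0 < N ∧ ∀ n, s.gcd id ∣ n → N ≤ n → n ∈ AddSubmonoid.closure (s : Set ℕ) := by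
  classical
  induction s using Finset.induction_on with
  | empty =>
    refine ⟨1, by omega, ?_⟩
    intro n hdvd hN
    simp only [Finset.gcd_empty] at hdvd
    omega
  | @insert a s ha ih =>
    have hapos : 0 < a := hpos a (Finset.mem_insert_self a s)
    obtain ⟨N, hN0, hN⟩ := ih (fun x hx => hpos x (Finset.mem_insert_of_mem hx))
    set d := s.gcd id with hd
    have hsub : AddSubmonoid.closure (s : Set ℕ) ≤
        AddSubmonoid.closure ((insert a s : Finset ℕ) : Set ℕ) := by
      apply AddSubmonoid.closure_mono
      intro x hx
      simp only [Finset.coe_insert, Set.mem_insert_iff]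
      right; exact hx
    have hamem : ∀ k : ℕ, k * a ∈ AddSubmonoid.closure ((insert a s : Finset ℕ) : Set ℕ) := by
      intro k
      have h1 : a ∈ AddSubmonoid.closure ((insert a s : Finset ℕ) : Set ℕ) :=
        AddSubmonoid.subset_closure (by simp)
      have := AddSubmonoid.nsmul_mem _ h1 k
      simpa [nsmul_eq_mul] using this
    rcases Nat.eq_zero_or_pos d with hd0 | hdpos
    · -- all elements of s are 0, so s is empty by positivity
      refine ⟨a, by omega, ?_⟩
      intro n hdvd hn
      rw [Finset.gcd_insert, ← hd, hd0] at hdvd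
      have hdvd' : a ∣ n := by simpa using hdvd
      obtain ⟨k, hk⟩ := hdvd'
      rw [hk, mul_comm]
      exact hamem k
    · refine ⟨d * N + a * d + 1, by positivity, ?_⟩
      intro n hdvd hn
      rw [Finset.gcd_insert, ← hd] at hdvd
      set e := Nat.gcd a d with he
      have hepos : 0 < e := Nat.gcd_pos_of_pos_left d hapos
      have hco : Nat.Coprime (a / e) (d / e) := Nat.coprime_div_gcd_div_gcd hepos
      have hea : e ∣ a := Nat.gcd_dvd_left _ _
      have hed : e ∣ d := Nat.gcd_dvd_right _ _
      set n₀ := n - d * N with hn₀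
      have hen₀ : e ∣ n₀ := by
        have h1 : e ∣ n := by exact hdvd
        have h2 : e ∣ d * N := Dvd.dvd.mul_right hed N
        exact Nat.dvd_sub h1 h2
      have hrep : ∃ x y, n₀ / e = x * (a / e) + y * (d / e) := by
        apply rep_pair hco
        · exact Nat.div_pos (Nat.le_of_dvd hapos hea) hepos
        · exact Nat.div_pos (Nat.le_of_dvd hdpos hed) hepos
        · -- (a/e) * (d/e) ≤ n₀/e
          rw [Nat.le_div_iff_mul_le hepos]
          have h1 : a / e * (d / e) * e = (a / e) * d := by
            rw [mul_assoc, Nat.div_mul_cancel hed]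
          rw [h1]
          have h2 : a / e * d ≤ a * d := Nat.mul_le_mul_right _ (Nat.div_le_self _ _)
          omega
      obtain ⟨x, y, hxy⟩ := hrep
      have hn₀e : n₀ = x * a + y * d := by
        have h1 : n₀ = e * (n₀ / e) := (Nat.mul_div_cancel' hen₀).symm
        rw [h1, hxy]
        have h2 : e * (x * (a / e)) = x * a := by
          rw [← mul_assoc, mul_comm e x, mul_assoc, Nat.mul_div_cancel' hea]
        have h3 : e * (y * (d / e)) = y * d := by
          rw [← mul_assoc, mul_comm e y, mul_assoc, Nat.mul_div_cancel' hed]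
        rw [Nat.mul_add, h2, h3]
      -- n = x*a + (y+N)*d
      have hnn : n = x * a + (y + N) * d := by
        have : n = n₀ + d * N := by omega
        rw [this, hn₀e]; ring
      rw [hnn]
      apply AddSubmonoid.add_mem
      · exact hamem x
      · apply hsub
        apply hN ((y + N) * d) (dvd_mul_left d (y+N))
        calc N ≤ N * d := Nat.le_mul_of_pos_right _ hdpos
          _ ≤ (y + N) * d := Nat.mul_le_mul_right _ (by omega)

end NSproof6

namespace NSproof7
open NSproof NSproof2 NSproof3 NSproof6

variable {Λ Λ' : Set ℕ}

lemma child_facts (hΛ : IsNumericalSemigroup Λ) (hc : IsChildOf Λ' Λ) :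
    Λ' ⊆ Λ ∧ (∀ x ∈ Λ, x ∉ Λ' → x = sgFrobenius Λ') ∧ sgFrobenius Λ < sgFrobenius Λ' := by
  obtain ⟨hNS', hss, hun⟩ := hc
  have hsub : Λ' ⊆ Λ := hss.1
  have hne' : Λ' ≠ Set.univ := by
    intro hcu
    exact absurd (hcu ▸ hss.2) (by simp [hcu ▸ hsub])
  have hF'mem : sgFrobenius Λ' ∈ Λ := by
    rw [← hun]; right; rfl
  have hrm : ∀ x ∈ Λ, x ∉ Λ' → x = sgFrobenius Λ' := by
    intro x hx hx'
    rw [← hun] at hx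
    rcases hx with hx | hx
    · exact absurd hx hx'
    · exact hx
  refine ⟨hsub, hrm, ?_⟩
  have hlt : sgFrobenius Λ ≤ sgFrobenius Λ' := by
    by_cases hu : Λ = Set.univ
    · rw [hu, sgFrobenius, Set.compl_univ, csSup_empty]
      exact bot_le
    · apply csSup_le_csSup hNS'.2.2.bddAbove
      · rw [Set.nonempty_compl]; exact hu
      · exact Set.compl_subset_compl.mpr hsub
  have hneq : sgFrobenius Λ ≠ sgFrobenius Λ' := by
    intro hc'
    by_cases hu : Λ = Set.univ
    · have := frob_pos hNS' hne'
      rw [hu, sgFrobenius, Set.compl_univ, csSup_empty] at hc'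
      rw [← hc'] at this
      simp at this
    · exact frob_notMem hΛ hu (hc' ▸ hF'mem)
  omega

lemma desc_struct (hd : Relation.TransGen IsChildOf Λ' Λ) (hΛ : IsNumericalSemigroup Λ) :
    IsNumericalSemigroup Λ' ∧ Λ' ⊆ Λ ∧ ∀ x ∈ Λ, x ∉ Λ' → sgFrobenius Λ < x := by
  induction hd with
  | single h =>
    obtain ⟨hsub, hrm, hlt⟩ := child_facts hΛ h
    exact ⟨h.1, hsub, fun x hx hx' => (hrm x hx hx') ▸ hlt⟩
  | @tail b c hab hbc ih =>
    have hNSb : IsNumericalSemigroup b := hbc.1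
    obtain ⟨hNS', hsub', hrm'⟩ := ih hNSb
    obtain ⟨hsubb, hrmb, hltb⟩ := child_facts hΛ hbc
    refine ⟨hNS', hsub'.trans hsubb, ?_⟩
    intro x hx hx'
    by_cases hxb : x ∈ b
    · have := hrm' x hxb hx'
      omega
    · have := hrmb x hx hxb
      omega

/-- gcd of the elements ≤ Frobenius, as a Finset gcd -/
noncomputable def lowF (Λ : Set ℕ) : Finset ℕ :=
  ((Set.finite_Icc 1 (sgFrobenius Λ)).inter_of_right Λ).toFinset

noncomputable def lowGcd (Λ : Set ℕ) : ℕ := (lowF Λ).gcd id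

lemma mem_lowF {x : ℕ} : x ∈ lowF Λ ↔ x ∈ Λ ∧ 1 ≤ x ∧ x ≤ sgFrobenius Λ := by
  rw [lowF, Set.Finite.mem_toFinset]
  simp [and_assoc]

lemma ord_of_lowF_empty (hΛ : IsNumericalSemigroup Λ) (h : lowF Λ = ∅) : IsOrdinary Λ := by
  refine ⟨sgFrobenius Λ + 1, ?_⟩
  ext x
  simp only [Set.union_def, Set.mem_setOf_eq, Set.mem_singleton_iff]
  constructor
  · intro hx
    rcases Nat.eq_zero_or_pos x with rfl | hp
    · left; rfl
    · by_cases hxF : x ≤ sgFrobenius Λ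
      · exact absurd (mem_lowF.mpr ⟨hx, hp, hxF⟩) (by simp [h])
      · right; omega
  · rintro (rfl | hx)
    · exact hΛ.1
    · exact mem_of_frob_lt hΛ (by omega)

/-- if the low part has gcd 1, there are finitely many descendants -/
lemma desc_finite_of_gcd_one (hΛ : IsNumericalSemigroup Λ) (h1 : lowGcd Λ = 1) :
    (sgDescendants Λ).Finite := by
  obtain ⟨N, hN0, hN⟩ := closure_cofinite (lowF Λ) (fun x hx => (mem_lowF.mp hx).2.1)
  rw [lowGcd] at h1
  have hclos : ∀ n, N ≤ n → n ∈ AddSubmonoid.closure ((lowF Λ : Finset ℕ) : Set ℕ) :=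
    fun n hn => hN n (h1 ▸ one_dvd n) hn
  -- each descendant contains all n ≥ N
  have hdesc : ∀ Λ' ∈ sgDescendants Λ, ∀ n, N ≤ n → n ∈ Λ' := by
    intro Λ' hΛ' n hn
    obtain ⟨hNS', hsub', hrm'⟩ := desc_struct hΛ' hΛ
    set S : AddSubmonoid ℕ :=
      { carrier := Λ'
        add_mem' := fun {a b} ha hb => hNS'.2.1 a ha b hb
        zero_mem' := hNS'.1 } with hS
    have hlow : ((lowF Λ : Finset ℕ) : Set ℕ) ⊆ Λ' := by
      intro x hx
      rw [Finset.mem_coe, mem_lowF] at hx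
      by_contra hc
      have := hrm' x hx.1 hc
      omega
    have := (AddSubmonoid.closure_le (S := S)).mpr hlow (hclos n hn)
    exact this
  -- descendants are determined by their intersection with [0, N)
  apply Set.Finite.of_finite_image (f := fun X => X ∩ {x | x < N})
  · apply Set.Finite.subset ((Set.finite_Iio N).finite_subsets)
    rintro s ⟨X, _, rfl⟩
    intro x hx
    exact hx.2
  · intro X hX Y hY hXY
    have hXY' : X ∩ {x | x < N} = Y ∩ {x | x < N} := hXY
    ext x
    by_cases hx : x < N
    · constructor
      · intro h'
        have : x ∈ Y ∩ {x | x < N} := hXY' ▸ ⟨h', hx⟩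
        exact this.1
      · intro h'
        have : x ∈ X ∩ {x | x < N} := hXY'.symm ▸ ⟨h', hx⟩
        exact this.1
    · constructor
      · intro _; exact hdesc Y hY x (by omega)
      · intro _; exact hdesc X hX x (by omega)

lemma lowGcd_ge_two (hΛ : IsNumericalSemigroup Λ) (hinf : (sgDescendants Λ).Infinite)
    (hnord : ¬ IsOrdinary Λ) : 2 ≤ lowGcd Λ := by
  have hne : lowF Λ ≠ ∅ := fun hc => hnord (ord_of_lowF_empty hΛ hc)
  have h0 : lowGcd Λ ≠ 0 := by
    intro hc
    obtain ⟨x, hx⟩ := Finset.nonempty_iff_ne_empty.mpr hne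
    have := Finset.gcd_dvd (f := id) hx
    rw [lowGcd] at hc
    rw [hc] at this
    simp only [id_eq, Nat.zero_dvd] at this
    have := (mem_lowF.mp hx).2.1
    omega
  have h1 : lowGcd Λ ≠ 1 := by
    intro hc
    exact hinf (desc_finite_of_gcd_one hΛ hc)
  omega

end NSproof7

namespace NSproof8
open NSproof NSproof2 NSproof3 NSproof5 NSproof7

variable {Λ : Set ℕ}

noncomputable def tilde (Λ : Set ℕ) : Set ℕ :=
  ({0} : Set ℕ) ∪ {x | lowGcd Λ * x ∈ Λ ∧ lowGcd Λ * x ≤ sgFrobenius Λ} ∪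
    {x | sgFrobenius Λ / lowGcd Λ < x}

lemma univ_ord : IsOrdinary (Set.univ : Set ℕ) := by
  refine ⟨0, ?_⟩
  ext x; simp

lemma low_dvd (hΛ : IsNumericalSemigroup Λ) {y : ℕ} (hy : y ∈ Λ) (h1 : 1 ≤ y)
    (h2 : y ≤ sgFrobenius Λ) : lowGcd Λ ∣ y := by
  have := Finset.gcd_dvd (f := id) (mem_lowF.mpr ⟨hy, h1, h2⟩)
  simpa [lowGcd] using this

lemma tilde_NS (hΛ : IsNumericalSemigroup Λ) (hd : 1 ≤ lowGcd Λ) :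
    IsNumericalSemigroup (tilde Λ) := by
  refine ⟨Or.inl (Or.inl rfl), ?_, ?_⟩
  · rintro a ((ha0 | hamid) | hahigh) b hb
    · simp only [Set.mem_singleton_iff] at ha0
      subst ha0
      simpa using hb
    · rcases hb with (hb0 | hbmid) | hbhigh
      · simp only [Set.mem_singleton_iff] at hb0
        subst hb0
        left; right; simpa using hamid
      · by_cases hle : lowGcd Λ * (a + b) ≤ sgFrobenius Λ
        · left; right
          refine ⟨?_, hle⟩
          have heq : lowGcd Λ * (a+b) = lowGcd Λ * a + lowGcd Λ * b := by ring
          rw [heq]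
          exact hΛ.2.1 _ hamid.1 _ hbmid.1
        · right
          simp only [Set.mem_setOf_eq]
          rw [Nat.div_lt_iff_lt_mul (by omega)]
          have := mul_comm (a + b) (lowGcd Λ)
          omega
      · right
        simp only [Set.mem_setOf_eq] at *
        omega
    · right
      simp only [Set.mem_setOf_eq] at *
      omega
  · apply (Set.finite_Icc 1 (sgFrobenius Λ / lowGcd Λ)).subset
    intro x hx
    simp only [tilde, Set.mem_compl_iff, Set.mem_union, Set.mem_singleton_iff,
      Set.mem_setOf_eq, not_or] at hx
    push_neg at hx
    obtain ⟨⟨hx0, _⟩, hxh⟩ := hx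
    exact ⟨by omega, by omega⟩

lemma tilde_gaps_image (hΛ : IsNumericalSemigroup Λ) (hd : 1 ≤ lowGcd Λ) :
    (fun x => lowGcd Λ * x) '' (tilde Λ)ᶜ = {a | a ∈ Λᶜ ∧ lowGcd Λ ∣ a} := by
  ext a
  simp only [Set.mem_image, Set.mem_setOf_eq, Set.mem_compl_iff]
  constructor
  · rintro ⟨x, hx, rfl⟩
    simp only [tilde, Set.mem_union, Set.mem_singleton_iff, Set.mem_setOf_eq, not_or,
      Set.mem_compl_iff] at hx
    push_neg at hx
    obtain ⟨⟨hx0, hmid⟩, hxh⟩ := hx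
    refine ⟨?_, Dvd.intro _ rfl⟩
    intro hc
    have h1 : x * lowGcd Λ ≤ sgFrobenius Λ := (Nat.le_div_iff_mul_le (by omega)).mp hxh
    have h2 := mul_comm x (lowGcd Λ)
    exact absurd (by omega : lowGcd Λ * x ≤ sgFrobenius Λ) (by simpa using hmid hc)
  · rintro ⟨ha, hdvd⟩
    obtain ⟨x, rfl⟩ := hdvd
    refine ⟨x, ?_, rfl⟩
    have ha1 : 1 ≤ lowGcd Λ * x := by
      rcases Nat.eq_zero_or_pos (lowGcd Λ * x) with hc | hp
      · exact absurd (hc ▸ hΛ.1) ha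
      · exact hp
    have haF : lowGcd Λ * x ≤ sgFrobenius Λ := (gaps_subset hΛ ha).2
    simp only [tilde, Set.mem_union, Set.mem_singleton_iff, Set.mem_setOf_eq, not_or,
      Set.mem_compl_iff]
    push_neg
    refine ⟨⟨?_, fun hc => absurd hc ha⟩, ?_⟩
    · rcases Nat.eq_zero_or_pos x with rfl | hp
      · simp at ha1
      · omega
    · rw [Nat.le_div_iff_mul_le (by omega)]
      have := mul_comm x (lowGcd Λ)
      omega

lemma tilde_genus (hΛ : IsNumericalSemigroup Λ) (hd : 2 ≤ lowGcd Λ) :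
    2 * sgGenus (tilde Λ) ≤ sgGenus Λ := by
  have hA2fin : ({a | a ∈ Λᶜ ∧ lowGcd Λ ∣ a} : Set ℕ).Finite := hΛ.2.2.subset (fun a ha => ha.1)
  have hA1fin : ({a | a ∈ Λᶜ ∧ ¬ lowGcd Λ ∣ a} : Set ℕ).Finite := hΛ.2.2.subset (fun a ha => ha.1)
  have s1 : sgGenus (tilde Λ) = ({a | a ∈ Λᶜ ∧ lowGcd Λ ∣ a} : Set ℕ).ncard := by
    rw [sgGenus, ← tilde_gaps_image hΛ (by omega)]
    rw [Set.ncard_image_of_injOn]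
    intro x _ y _ hxy
    simp only at hxy
    exact Nat.eq_of_mul_eq_mul_left (by omega) hxy
  have s2 : ({a | a ∈ Λᶜ ∧ lowGcd Λ ∣ a} : Set ℕ).ncard ≤
      ({a | a ∈ Λᶜ ∧ ¬ lowGcd Λ ∣ a} : Set ℕ).ncard := by
    apply Set.ncard_le_ncard_of_injOn (fun a => a - 1) ?_ ?_ hA1fin
    · rintro a ⟨ha, hdvd⟩
      simp only [Set.mem_setOf_eq]
      have ha1 : 1 ≤ a := by
        rcases Nat.eq_zero_or_pos a with rfl | hp
        · exact absurd hΛ.1 ha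
        · exact hp
      have had : lowGcd Λ ≤ a := Nat.le_of_dvd (by omega) hdvd
      have haF : a ≤ sgFrobenius Λ := (gaps_subset hΛ ha).2
      have hsub1 : a - (a - 1) = 1 := by omega
      constructor
      · -- a - 1 is a gap
        intro hc
        have hldvd := low_dvd hΛ hc (by omega) (by omega)
        have h1 : lowGcd Λ ∣ a - (a-1) := Nat.dvd_sub hdvd hldvd
        rw [hsub1] at h1
        have := Nat.le_of_dvd (by omega) h1
        omega
      · -- lowGcd does not divide a - 1
        intro hc
        have h1 : lowGcd Λ ∣ a - (a-1) := Nat.dvd_sub hdvd hc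
        rw [hsub1] at h1
        have := Nat.le_of_dvd (by omega) h1
        omega
    · rintro a ⟨ha, hda⟩ b ⟨hb, hdb⟩ hab
      have ha1 : 1 ≤ a := by
        rcases Nat.eq_zero_or_pos a with rfl | hp
        · exact absurd hΛ.1 ha
        · exact hp
      have hb1 : 1 ≤ b := by
        rcases Nat.eq_zero_or_pos b with rfl | hp
        · exact absurd hΛ.1 hb
        · exact hp
      simp only at hab
      omega
  have s3 : ({a | a ∈ Λᶜ ∧ ¬ lowGcd Λ ∣ a} : Set ℕ).ncard +
      ({a | a ∈ Λᶜ ∧ lowGcd Λ ∣ a} : Set ℕ).ncard = sgGenus Λ := by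
    rw [sgGenus, ← Set.ncard_union_eq ?_ hA1fin hA2fin]
    · congr 1
      ext a
      simp only [Set.mem_union, Set.mem_setOf_eq]
      tauto
    · rw [Set.disjoint_left]
      rintro a ⟨_, hna⟩ ⟨_, hda⟩
      exact hna hda
  omega

lemma tilde_recon (hΛ : IsNumericalSemigroup Λ) (hd : 2 ≤ lowGcd Λ) {y : ℕ}
    (h1 : 1 ≤ y) (h2 : y ≤ sgFrobenius Λ) :
    y ∈ Λ ↔ (lowGcd Λ ∣ y ∧ y / lowGcd Λ ∈ tilde Λ) := by
  constructor
  · intro hy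
    have hdvd : lowGcd Λ ∣ y := low_dvd hΛ hy h1 h2
    refine ⟨hdvd, ?_⟩
    left; right
    rw [Set.mem_setOf_eq, Nat.mul_div_cancel' hdvd]
    exact ⟨hy, h2⟩
  · rintro ⟨hdvd, ht⟩
    have hy : lowGcd Λ * (y / lowGcd Λ) = y := Nat.mul_div_cancel' hdvd
    rcases ht with (h0 | hmid) | hhigh
    · simp only [Set.mem_singleton_iff] at h0
      rw [h0] at hy
      simp at hy
      omega
    · rw [Set.mem_setOf_eq, hy] at hmid
      exact hmid.1
    · simp only [Set.mem_setOf_eq] at hhigh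
      have := Nat.div_le_div_right (c := lowGcd Λ) h2
      omega

lemma ord_unique (hΛ : IsNumericalSemigroup Λ) (hord : IsOrdinary Λ) :
    Λ = ({0} : Set ℕ) ∪ {n | sgGenus Λ + 1 ≤ n} := by
  obtain ⟨m, hm⟩ := hord
  have hcompl : Λᶜ = Set.Ico 1 m := by
    rw [hm]
    ext x
    simp only [Set.mem_compl_iff, Set.union_def, Set.mem_setOf_eq, Set.mem_singleton_iff,
      Set.mem_Ico]
    omega
  have hg : sgGenus Λ = m - 1 := by
    rw [sgGenus, hcompl, Set.ncard_eq_toFinset_card', Set.toFinset_Ico, Nat.card_Ico]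
  rw [hg, hm]
  ext x
  simp only [Set.union_def, Set.mem_setOf_eq, Set.mem_singleton_iff]
  omega

end NSproof8

namespace NSproof9
open NSproof NSproof2 NSproof3 NSproof5 NSproof7 NSproof8

open scoped Classical

lemma count_bound (g : ℕ) :
    {Λ : Set ℕ | IsNumericalSemigroup Λ ∧ sgGenus Λ = g ∧ (sgDescendants Λ).Infinite}.ncard ≤
      (2*g+2)^5 * 2^(g/2) := by
  classical
  set X := {Λ : Set ℕ | IsNumericalSemigroup Λ ∧ sgGenus Λ = g ∧ (sgDescendants Λ).Infinite}
    with hX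
  have hXfin : X.Finite := (NSgS_finite g).subset (fun Λ h => ⟨h.1, h.2.1⟩)
  have hsplit : X = (X ∩ {Λ | IsOrdinary Λ}) ∪ (X ∩ {Λ | ¬ IsOrdinary Λ}) := by
    rw [← Set.inter_union_distrib_left]
    have : ({Λ : Set ℕ | IsOrdinary Λ} ∪ {Λ | ¬ IsOrdinary Λ}) = Set.univ := by
      ext Λ; simp [em]
    rw [this, Set.inter_univ]
  have h1 : (X ∩ {Λ | IsOrdinary Λ}).ncard ≤ 1 := by
    have hsub : (X ∩ {Λ | IsOrdinary Λ}) ⊆ {({0} : Set ℕ) ∪ {n | g+1 ≤ n}} := by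
      rintro Λ ⟨hΛX, hord⟩
      obtain ⟨hΛ, hg, _⟩ := hΛX
      have := ord_unique hΛ hord
      rw [hg] at this
      simp only [Set.mem_singleton_iff]
      exact this
    calc (X ∩ {Λ | IsOrdinary Λ}).ncard ≤ ({({0} : Set ℕ) ∪ {n | g+1 ≤ n}} : Set (Set ℕ)).ncard :=
          Set.ncard_le_ncard hsub (Set.finite_singleton _)
      _ = 1 := Set.ncard_singleton _
  -- the non-ordinary part
  set U : Finset (Set ℕ) := (Finset.range (g/2+1)).biUnion (fun i => NSF i) with hU
  set T : Finset (ℕ × ℕ × Set ℕ) :=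
    (Finset.range (2*g+2)) ×ˢ ((Finset.range (2*g+2)) ×ˢ U) with hT
  have hfacts : ∀ Λ ∈ X ∩ {Λ | ¬ IsOrdinary Λ}, IsNumericalSemigroup Λ ∧ sgGenus Λ = g ∧
      2 ≤ lowGcd Λ ∧ sgFrobenius Λ + 1 ≤ 2*g := by
    rintro Λ ⟨⟨hΛ, hg, hinf⟩, hnord⟩
    have hne : Λ ≠ Set.univ := by
      intro hc
      exact hnord (by rw [hc]; exact univ_ord)
    refine ⟨hΛ, hg, lowGcd_ge_two hΛ hinf hnord, by rw [← hg]; exact frob_le hΛ hne⟩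
  have h2 : (X ∩ {Λ | ¬ IsOrdinary Λ}).ncard ≤ T.card := by
    have hfin : (↑T : Set (ℕ × ℕ × Set ℕ)).Finite := T.finite_toSet
    have hcard := Set.ncard_le_ncard_of_injOn (s := X ∩ {Λ | ¬ IsOrdinary Λ})
      (t := (↑T : Set (ℕ × ℕ × Set ℕ)))
      (fun Λ => (lowGcd Λ, sgFrobenius Λ, tilde Λ)) ?_ ?_ hfin
    · rwa [Set.ncard_coe_finset] at hcard
    · -- maps to T
      intro Λ hΛX
      obtain ⟨hΛ, hg, hd2, hF⟩ := hfacts Λ hΛX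
      obtain ⟨⟨_, _, hinf⟩, hnord⟩ := hΛX
      show (lowGcd Λ, sgFrobenius Λ, tilde Λ) ∈ (↑T : Set (ℕ × ℕ × Set ℕ))
      rw [Finset.mem_coe, hT]
      have hlowne : lowF Λ ≠ ∅ := fun hc => hnord (ord_of_lowF_empty hΛ hc)
      obtain ⟨x, hx⟩ := Finset.nonempty_iff_ne_empty.mpr hlowne
      obtain ⟨hxΛ, hx1, hxF⟩ := mem_lowF.mp hx
      have hdx : lowGcd Λ ∣ x := by
        have := Finset.gcd_dvd (f := id) hx
        simpa [lowGcd] using this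
      have hdF : lowGcd Λ ≤ sgFrobenius Λ := le_trans (Nat.le_of_dvd (by omega) hdx) hxF
      refine Finset.mem_product.mpr ⟨Finset.mem_range.mpr (show lowGcd Λ < 2*g+2 by omega),
        Finset.mem_product.mpr
          ⟨Finset.mem_range.mpr (show sgFrobenius Λ < 2*g+2 by omega), ?_⟩⟩
      rw [hU, Finset.mem_biUnion]
      refine ⟨sgGenus (tilde Λ), Finset.mem_range.mpr ?_, mem_NSF.mpr ⟨tilde_NS hΛ (by omega), rfl⟩⟩
      have := tilde_genus hΛ hd2
      omega
    · -- injective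
      intro Λ₁ hΛ₁ Λ₂ hΛ₂ heq
      obtain ⟨hΛ1, hg1, hd1, hF1⟩ := hfacts Λ₁ hΛ₁
      obtain ⟨hΛ2, hg2, hd2, hF2⟩ := hfacts Λ₂ hΛ₂
      simp only [Prod.mk.injEq] at heq
      obtain ⟨hdeq, hFeq, hteq⟩ := heq
      ext y
      rcases Nat.eq_zero_or_pos y with rfl | hy1
      · simp [hΛ1.1, hΛ2.1]
      by_cases hyF : y ≤ sgFrobenius Λ₁
      · rw [tilde_recon hΛ1 hd1 hy1 hyF, tilde_recon hΛ2 hd2 hy1 (by omega), hdeq, hteq]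
      · constructor
        · intro _; exact mem_of_frob_lt hΛ2 (by omega)
        · intro _; exact mem_of_frob_lt hΛ1 (by omega)
  -- cardinality of T
  have hTcard : T.card ≤ (2*g+2) * ((2*g+2) * ((g/2+1) * ((g+2) * 2^(g/2)))) := by
    rw [hT, Finset.card_product, Finset.card_product, Finset.card_range]
    have hUcard : U.card ≤ (g/2+1) * ((g+2) * 2^(g/2)) := by
      calc U.card ≤ ∑ i ∈ Finset.range (g/2+1), (NSF i).card := Finset.card_biUnion_le
        _ ≤ ∑ _i ∈ Finset.range (g/2+1), (g+2) * 2^(g/2) := by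
            apply Finset.sum_le_sum
            intro i hi
            rw [Finset.mem_range] at hi
            calc (NSF i).card ≤ (2*i+2) * 2^i := card_NSF i
              _ ≤ (g+2) * 2^(g/2) := by
                  apply Nat.mul_le_mul
                  · omega
                  · exact Nat.pow_le_pow_right (by omega) (by omega)
        _ = (g/2+1) * ((g+2) * 2^(g/2)) := by
            rw [Finset.sum_const, Finset.card_range, smul_eq_mul]
    exact Nat.mul_le_mul_left _ (Nat.mul_le_mul_left _ hUcard)
  -- put everything together
  have htotal : X.ncard ≤ 1 + (2*g+2) * ((2*g+2) * ((g/2+1) * ((g+2) * 2^(g/2)))) := by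
    calc X.ncard ≤ (X ∩ {Λ | IsOrdinary Λ}).ncard + (X ∩ {Λ | ¬ IsOrdinary Λ}).ncard := by
          have hu := Set.ncard_union_le (X ∩ {Λ | IsOrdinary Λ}) (X ∩ {Λ | ¬ IsOrdinary Λ})
          rw [← hsplit] at hu
          exact hu
      _ ≤ 1 + (2*g+2) * ((2*g+2) * ((g/2+1) * ((g+2) * 2^(g/2)))) := by
          have := le_trans h2 hTcard
          omega
  apply le_trans htotal
  -- arithmetic: 1 + a*(a*(c*(e*b))) ≤ a^5*b with c,e ≤ a, 2 ≤ a, 1 ≤ b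
  set a := 2*g+2 with ha
  set b := 2^(g/2) with hb
  have hc1 : g/2+1 ≤ a := by omega
  have he1 : g+2 ≤ a := by omega
  have hb1 : 1 ≤ b := Nat.one_le_two_pow
  have ha2 : 2 ≤ a := by omega
  have step : (g/2+1) * ((g+2) * b) ≤ a * (a * b) :=
    Nat.mul_le_mul hc1 (Nat.mul_le_mul he1 (le_refl b))
  have step2 : a * (a * ((g/2+1) * ((g+2) * b))) ≤ a * (a * (a * (a * b))) :=
    Nat.mul_le_mul_left _ (Nat.mul_le_mul_left _ step)
  have hpow : a^5 * b = a * (a * (a * (a * (a * b)))) := by ring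
  have hfin : 1 + a * (a * (a * (a * b))) ≤ a^5 * b := by
    rw [hpow]
    have h4 : 0 < a * (a * (a * (a * b))) := by positivity
    calc 1 + a * (a * (a * (a * b))) ≤ 2 * (a * (a * (a * (a * b)))) := by omega
      _ ≤ a * (a * (a * (a * (a * b)))) := Nat.mul_le_mul_right _ ha2
  omega

end NSproof9

namespace NSfinal
open NSproof NSproof9 Filter

lemma real_bound (g : ℕ) :
    (({Λ : Set ℕ | IsNumericalSemigroup Λ ∧ sgGenus Λ = g ∧ (sgDescendants Λ).Infinite}.ncard : ℝ))
      ≤ ((2*g+2 : ℕ) : ℝ)^5 * (Real.sqrt 2)^g := by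
  have h1 := count_bound g
  have h2 : (({Λ : Set ℕ | IsNumericalSemigroup Λ ∧ sgGenus Λ = g ∧
      (sgDescendants Λ).Infinite}.ncard : ℝ)) ≤ (((2*g+2)^5 * 2^(g/2) : ℕ) : ℝ) := by
    exact_mod_cast h1
  apply le_trans h2
  push_cast
  have h3 : ((2:ℝ))^(g/2) ≤ (Real.sqrt 2)^g := by
    have hs : (Real.sqrt 2)^2 = 2 := Real.sq_sqrt (by norm_num)
    have h4 : ((2:ℝ))^(g/2) = (Real.sqrt 2)^(2*(g/2)) := by
      rw [pow_mul, hs]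
    rw [h4]
    apply pow_le_pow_right₀
    · have := Real.sqrt_le_sqrt (by norm_num : (1:ℝ) ≤ 2)
      simpa using this
    · omega
  have h5 : (0:ℝ) ≤ ((2*g+2 : ℕ):ℝ)^5 := by positivity
  have := mul_le_mul_of_nonneg_left h3 h5
  push_cast at this ⊢
  linarith

theorem stmt19' :
    Filter.limsup (fun g : ℕ =>
        (({Λ : Set ℕ | IsNumericalSemigroup Λ ∧ sgGenus Λ = g ∧ (sgDescendants Λ).Infinite}.ncard : ℝ))
          ^ ((g : ℝ)⁻¹)) Filter.atTop ≤ Real.sqrt 2 := by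
  set u : ℕ → ℝ := fun g =>
    (({Λ : Set ℕ | IsNumericalSemigroup Λ ∧ sgGenus Λ = g ∧
      (sgDescendants Λ).Infinite}.ncard : ℝ)) ^ ((g : ℝ)⁻¹) with hu
  have hu0 : ∀ g, 0 ≤ u g := fun g => Real.rpow_nonneg (Nat.cast_nonneg _) _
  have hcob : Filter.IsCoboundedUnder (· ≤ ·) Filter.atTop u :=
    Filter.isCoboundedUnder_le_of_le Filter.atTop (x := 0) hu0
  apply le_of_forall_pos_le_add
  intro ε hε
  apply Filter.limsup_le_of_le hcob
  -- eventual bound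
  have hs2pos : (0:ℝ) < Real.sqrt 2 := Real.sqrt_pos.mpr (by norm_num)
  set r : ℝ := Real.sqrt 2 + ε with hr
  have hrpos : 0 < r := by positivity
  have hr' : 1 < r / Real.sqrt 2 := (one_lt_div hs2pos).mpr (by rw [hr]; linarith)
  have htend := tendsto_pow_const_div_const_pow_of_one_lt 5 hr'
  have hev : ∀ᶠ n : ℕ in Filter.atTop, (n:ℝ)^5 / (r / Real.sqrt 2)^n < 1/4^5 := by
    apply htend.eventually_lt_const
    norm_num
  filter_upwards [hev, Filter.eventually_ge_atTop 1] with g hlt hg1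
  -- first : counting bound gives m_g ≤ r ^ g
  have hbound : (({Λ : Set ℕ | IsNumericalSemigroup Λ ∧ sgGenus Λ = g ∧
      (sgDescendants Λ).Infinite}.ncard : ℝ)) ≤ r ^ g := by
    apply le_trans (real_bound g)
    have hrg : (0:ℝ) < (r / Real.sqrt 2)^g := by positivity
    have h1 : ((2*g+2 : ℕ):ℝ)^5 ≤ ((4*g : ℕ):ℝ)^5 := by
      apply pow_le_pow_left₀ (by positivity)
      exact_mod_cast (by omega : 2*g+2 ≤ 4*g)
    have h2 : ((4*g : ℕ):ℝ)^5 = 4^5 * (g:ℝ)^5 := by push_cast; ring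
    have h3 : 4^5 * (g:ℝ)^5 < (r / Real.sqrt 2)^g := by
      rw [div_lt_div_iff₀ hrg (by norm_num : (0:ℝ) < 4^5)] at hlt
      linarith
    have h4 : ((2*g+2 : ℕ):ℝ)^5 * (Real.sqrt 2)^g ≤
        (r / Real.sqrt 2)^g * (Real.sqrt 2)^g := by
      apply mul_le_mul_of_nonneg_right _ (by positivity)
      linarith
    apply le_trans h4
    rw [← mul_pow, div_mul_cancel₀ _ (ne_of_gt hs2pos)]
  -- then take g-th roots
  have hgR : (0:ℝ) < (g:ℝ) := by exact_mod_cast hg1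
  have hrpow : (r ^ g : ℝ) ^ ((g:ℝ)⁻¹) = r := by
    rw [← Real.rpow_natCast r g, ← Real.rpow_mul (le_of_lt hrpos),
      mul_inv_cancel₀ (ne_of_gt hgR), Real.rpow_one]
  calc u g ≤ (r ^ g : ℝ) ^ ((g:ℝ)⁻¹) :=
        Real.rpow_le_rpow (Nat.cast_nonneg _) hbound (by positivity)
    _ = r := hrpow

end NSfinal

theorem stmt19 :
    Filter.limsup (fun g : ℕ =>
        (({Λ : Set ℕ | IsNumericalSemigroup Λ ∧ sgGenus Λ = g ∧ (sgDescendants Λ).Infinite}.ncard : ℝ))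
          ^ ((g : ℝ)⁻¹)) Filter.atTop ≤ Real.sqrt 2 := NSfinal.stmt19'
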